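/- Let A, B, T be nonzero integers with gcd(A,B) = 1 and T squarefree. Then gcd((A²+T²B²)², 4AB(A²−T²B²)) ≤ 4T⁴. -/

import Mathlib

private lemma fact_le_of_not_dvd {p k n : ℕ} (hp : p.Prime) (hn : n ≠ 0)
    (h2 : ¬ p^(k+1) ∣ n) : n.factorization p ≤ k := by
  by_contra h
  exact h2 ((hp.pow_dvd_iff_le_factorization hn).mpr (by omega))

private lemma zmod4_odd (j n m : ZMod 4) : (j+j)^2 + (2*n+1)^2*(2*m+1)^2 ≠ 0 := by
  revert j n m; decide

private lemma zmod4_odd' (j v : ZMod 4) : (2*j+1)^2 + v^2 ≠ 0 := by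
  revert j v; decide

private lemma zmod16_a (j n m : ZMod 16) : (2*j+1)^2 + (2*n)^2*(m+m)^2 ≠ 0 := by
  revert j n m; decide

set_option maxHeartbeats 1000000 in
private lemma zmod16_b (a u m : ZMod 16) : a^2 + (2*(2*u+1))^2*(2*m+1)^2 ≠ 0 := by
  revert a u m; decide

private lemma two_not_unit : ¬ IsUnit (2:ℤ) := by
  rw [Int.isUnit_iff]; norm_num

theorem stmt_10 (A B T : ℤ) (hA : A ≠ 0) (hB : B ≠ 0) (hT : 1 ≤ T)
    (hAB : IsCoprime A B) (hsq : Squarefree T) :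
    (((A ^ 2 + T ^ 2 * B ^ 2) ^ 2).gcd (4 * A * B * (A ^ 2 - T ^ 2 * B ^ 2)) : ℤ)
      ≤ 4 * T ^ 4 := by
  have hT0 : (0:ℤ) < T := hT
  set S : ℤ := A^2 + T^2*B^2 with hSdef
  set D : ℤ := A^2 - T^2*B^2 with hDdef
  have hSpos : 0 < S := by positivity
  by_cases hD0 : D = 0
  · -- degenerate case: A² = T²B², forces B = ±1
    have hA2 : A^2 = T^2*B^2 := by
      have := hD0; rw [hDdef] at this; linarith
    have hBdvd : B ∣ A^2 := ⟨T^2*B, by rw [hA2]; ring⟩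
    have hBu : IsUnit B := (hAB.pow_left : IsCoprime (A^2) B).isUnit_of_dvd' hBdvd dvd_rfl
    have hB2 : B^2 = 1 := by
      rcases Int.isUnit_iff.mp hBu with h | h <;> rw [h] <;> ring
    have hS2 : S^2 = 4*T^4 := by
      rw [hSdef, hA2, hB2]; ring
    have hX : 4*A*B*D = 0 := by rw [hD0]; ring
    rw [hX, Int.gcd_zero_right]
    rw [Int.natAbs_of_nonneg (by positivity), hS2]
  · -- main case
    have hX0 : 4*A*B*D ≠ 0 := by
      simp only [mul_ne_zero_iff]
      exact ⟨⟨⟨by norm_num, hA⟩, hB⟩, hD0⟩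
    set a := A.natAbs with hadef
    set b := B.natAbs with hbdef
    set t := T.natAbs with htdef
    set s := S.natAbs with hsdef2
    set d := D.natAbs with hddef2
    have ha : a ≠ 0 := Int.natAbs_ne_zero.mpr hA
    have hb : b ≠ 0 := Int.natAbs_ne_zero.mpr hB
    have ht : t ≠ 0 := Int.natAbs_ne_zero.mpr (by linarith)
    have hs : s ≠ 0 := Int.natAbs_ne_zero.mpr (by linarith)
    have hd : d ≠ 0 := Int.natAbs_ne_zero.mpr hD0
    have habcop : Nat.Coprime a b := Int.isCoprime_iff_gcd_eq_one.mp hAB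
    have htsq : Squarefree t := Int.squarefree_natAbs.mpr hsq
    -- transfer lemma
    have tr : ∀ (k : ℕ) (z : ℤ) (p : ℕ), ((p:ℤ))^k ∣ z ↔ p^k ∣ z.natAbs := by
      intro k z p
      rw [← Int.natAbs_dvd_natAbs]
      simp [Int.natAbs_pow]
    have habsTB : (T^2*B^2).natAbs = t^2*b^2 := by
      simp [Int.natAbs_mul, Int.natAbs_pow]; rfl
    have habsA2 : (A^2).natAbs = a^2 := by simp [Int.natAbs_pow]; rfl
    have keyN : Nat.gcd (s^2) (4*(a*(b*d))) ∣ 4*t^4 := by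
      have hs2 : s^2 ≠ 0 := pow_ne_zero _ hs
      have hx : 4*(a*(b*d)) ≠ 0 := by positivity
      rw [← Nat.factorization_le_iff_dvd (Nat.gcd_ne_zero_left hs2) (by positivity)]
      rw [Nat.factorization_gcd hs2 hx, Finsupp.le_def]
      intro p
      rw [Finsupp.inf_apply]
      by_cases hp : p.Prime
      swap
      · simp [Nat.factorization_eq_zero_of_not_prime _ hp]
      have hvs2 : (s^2).factorization p = 2 * s.factorization p := by
        rw [Nat.factorization_pow]; simp
      have hvx : (4*(a*(b*d))).factorization p
          = (4:ℕ).factorization p + (a.factorization p + (b.factorization p + d.factorization p)) := by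
        rw [Nat.factorization_mul (by norm_num) (by positivity),
            Nat.factorization_mul ha (by positivity),
            Nat.factorization_mul hb hd]
        simp
      have hvT : (4*t^4).factorization p = (4:ℕ).factorization p + 4 * t.factorization p := by
        rw [Nat.factorization_mul (by norm_num) (by positivity), Nat.factorization_pow]
        simp
      rw [hvs2, hvx, hvT]
      by_cases hps : p ∣ s
      swap
      · have : s.factorization p = 0 := Nat.factorization_eq_zero_of_not_dvd hps
        omega
      -- p divides S
      have hpS : (p:ℤ) ∣ S := by rw [← Int.natAbs_dvd_natAbs]; simpa using hps
      by_cases hp2 : p = 2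
      · -- p = 2
        subst hp2
        have hv4 : (4:ℕ).factorization 2 = 2 := by
          have h4 : (4:ℕ) = 2^2 := rfl
          rw [h4, Nat.Prime.factorization_pow Nat.prime_two]
          simp
        by_cases h2t : 2 ∣ t
        · -- T even : show ¬ 16 ∣ S hence v₂(s) ≤ 3
          have h2T : (2:ℤ) ∣ T := by
            rw [← Int.natAbs_dvd_natAbs]; simpa using h2t
          obtain ⟨n, hn⟩ := h2T
          have h4T : ¬ (4:ℤ) ∣ T := by
            intro h
            exact two_not_unit (hsq 2 (by
              show (2:ℤ)*2 ∣ T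
              norm_num
              exact h))
          have hnodd : Odd n := Int.odd_iff.mpr (by omega)
          have h16 : ¬ (2:ℤ)^4 ∣ S := by
            intro h16
            have hz : ((S : ℤ) : ZMod 16) = 0 := by
              rw [ZMod.intCast_zmod_eq_zero_iff_dvd]
              exact_mod_cast h16
            rcases Int.even_or_odd B with ⟨m, hm⟩ | ⟨m, hm⟩
            · -- B even forces A odd
              have hAodd : Odd A := by
                rcases Int.even_or_odd A with ⟨j, hj⟩ | h
                · exact absurd (hAB.isUnit_of_dvd' ⟨j, by omega⟩ ⟨m, by omega⟩)
                    two_not_unit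
                · exact h
              obtain ⟨j, hj⟩ := hAodd
              rw [hSdef, hj, hn, hm] at hz
              push_cast at hz
              exact zmod16_a (j:ZMod 16) (n:ZMod 16) (m:ZMod 16) (by linear_combination hz)
            · obtain ⟨u, hu⟩ := hnodd
              rw [hSdef, hn, hu, hm] at hz
              push_cast at hz
              exact zmod16_b (A:ZMod 16) (u:ZMod 16) (m:ZMod 16) (by linear_combination hz)
          have hvs3 : s.factorization 2 ≤ 3 :=
            fact_le_of_not_dvd Nat.prime_two hs
              (fun hdvd => h16 (by exact_mod_cast (tr 4 S 2).mpr hdvd))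
          have hvt1 : 1 ≤ t.factorization 2 :=
            Nat.Prime.factorization_pos_of_dvd Nat.prime_two ht h2t
          omega
        · -- T odd : show ¬ 4 ∣ S hence v₂(s) ≤ 1
          have h2T : ¬ (2:ℤ) ∣ T := by
            intro h
            exact h2t (by rw [← Int.natAbs_dvd_natAbs] at h; simpa using h)
          have hTodd : Odd T := Int.odd_iff.mpr (by omega)
          obtain ⟨nn, hnn⟩ := hTodd
          have h4 : ¬ (2:ℤ)^2 ∣ S := by
            intro h4
            have hz : ((S : ℤ) : ZMod 4) = 0 := by
              rw [ZMod.intCast_zmod_eq_zero_iff_dvd]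
              exact_mod_cast h4
            rcases Int.even_or_odd A with ⟨j, hj⟩ | ⟨j, hj⟩
            · have hBodd : Odd B := by
                rcases Int.even_or_odd B with ⟨m, hm⟩ | h
                · exact absurd (hAB.isUnit_of_dvd' ⟨j, by omega⟩ ⟨m, by omega⟩)
                    two_not_unit
                · exact h
              obtain ⟨m, hm⟩ := hBodd
              rw [hSdef, hj, hnn, hm] at hz
              push_cast at hz
              exact zmod4_odd (j:ZMod 4) (nn:ZMod 4) (m:ZMod 4) (by linear_combination hz)
            · rw [hSdef, hj] at hz
              push_cast at hz
              exact zmod4_odd' (j:ZMod 4) ((T:ZMod 4)*(B:ZMod 4)) (by linear_combination hz)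
          have hvs1 : s.factorization 2 ≤ 1 :=
            fact_le_of_not_dvd Nat.prime_two hs
              (fun hdvd => h4 (by exact_mod_cast (tr 2 S 2).mpr hdvd))
          omega
      · -- p odd
        have hpodd : ¬ (p ∣ 2) := fun h =>
          hp2 ((Nat.prime_dvd_prime_iff_eq hp Nat.prime_two).mp h)
        have hv4 : (4:ℕ).factorization p = 0 := by
          apply Nat.factorization_eq_zero_of_not_dvd
          intro h
          exact hpodd (hp.dvd_of_dvd_pow (n := 2) (show p ∣ 2^2 by norm_num; exact h))
        have hpb : ¬ p ∣ b := by
          intro hpb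
          have hpB : (p:ℤ) ∣ B := by rw [← Int.natAbs_dvd_natAbs]; simpa using hpb
          have hpA2 : (p:ℤ) ∣ A^2 := by
            rw [show A^2 = S - T^2*B^2 by rw [hSdef]; ring]
            exact dvd_sub hpS (by
              rw [show T^2*B^2 = (T^2*B)*B by ring]
              exact hpB.mul_left _)
          have hpa : p ∣ a := by
            apply hp.dvd_of_dvd_pow (n := 2)
            rw [← habsA2, ← pow_one p, ← tr 1 (A^2) p, pow_one]
            exact hpA2
          have := Nat.dvd_gcd hpa hpb
          rw [habcop.gcd_eq_one, Nat.dvd_one] at this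
          exact hp.ne_one this
        have hvb : b.factorization p = 0 := Nat.factorization_eq_zero_of_not_dvd hpb
        by_cases hpa : p ∣ a
        · -- p ∣ A, hence p ∣ T with v_p(T)=1
          have hpA : (p:ℤ) ∣ A := by rw [← Int.natAbs_dvd_natAbs]; simpa using hpa
          have hpTB : (p:ℤ) ∣ T^2*B^2 := by
            rw [show T^2*B^2 = S - A^2 by rw [hSdef]; ring]
            exact dvd_sub hpS (dvd_pow hpA two_ne_zero)
          have hpt : p ∣ t := by
            have h1 : p ∣ t^2*b^2 := by
              rw [← habsTB, ← pow_one p, ← tr 1 _ p, pow_one]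
              exact hpTB
            rcases (Nat.Prime.dvd_mul hp).mp h1 with h | h
            · exact hp.dvd_of_dvd_pow h
            · exact absurd (hp.dvd_of_dvd_pow h) hpb
          have hvt : t.factorization p = 1 :=
            le_antisymm (htsq.natFactorization_le_one p)
              (Nat.Prime.factorization_pos_of_dvd hp ht hpt)
          by_cases h3 : p^3 ∣ s
          · -- v_p(S) ≥ 3: then v_p(A)=1, v_p(D)=2
            have hp3S : (p:ℤ)^3 ∣ S := (tr 3 S p).mpr h3
            have htb0 : t^2*b^2 ≠ 0 := by positivity
            have hvtb : (t^2*b^2).factorization p = 2 := by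
              rw [Nat.factorization_mul (pow_ne_zero _ ht) (pow_ne_zero _ hb),
                Nat.factorization_pow, Nat.factorization_pow]
              simp [hvt, hvb]
            have hntb3 : ¬ p^3 ∣ t^2*b^2 := by
              rw [hp.pow_dvd_iff_le_factorization htb0, hvtb]; omega
            have hpT : (p:ℤ) ∣ T := by
              rw [← Int.natAbs_dvd_natAbs]; simpa using hpt
            have hva1 : a.factorization p = 1 := by
              refine le_antisymm ?_ (Nat.Prime.factorization_pos_of_dvd hp ha hpa)
              by_contra hcon
              have h2a : p^2 ∣ a := (hp.pow_dvd_iff_le_factorization ha).mpr (by omega)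
              have h4a2 : p^4 ∣ a^2 := by
                have := pow_dvd_pow_of_dvd h2a 2
                rwa [← pow_mul] at this
              have h3a2 : p^3 ∣ a^2 := (pow_dvd_pow p (by omega)).trans h4a2
              have h3A2 : (p:ℤ)^3 ∣ A^2 := (tr 3 (A^2) p).mpr (by rwa [habsA2])
              have h3TB : (p:ℤ)^3 ∣ T^2*B^2 := by
                rw [show T^2*B^2 = S - A^2 by rw [hSdef]; ring]
                exact dvd_sub hp3S h3A2
              exact hntb3 (by rw [← habsTB]; exact (tr 3 _ p).mp h3TB)
            have hp2D : (p:ℤ)^2 ∣ D := by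
              rw [hDdef]
              refine dvd_sub ?_ ?_
              · exact pow_dvd_pow_of_dvd hpA 2
              · exact Dvd.dvd.mul_right (pow_dvd_pow_of_dvd hpT 2) _
            have hvd2 : d.factorization p = 2 := by
              refine le_antisymm ?_ ((hp.pow_dvd_iff_le_factorization hd).mp
                ((tr 2 D p).mp hp2D))
              apply fact_le_of_not_dvd hp hd
              intro h3d
              have h3D : (p:ℤ)^3 ∣ D := (tr 3 D p).mpr h3d
              have h3TB2 : (p:ℤ)^3 ∣ 2*(T^2*B^2) := by
                rw [show 2*(T^2*B^2) = S - D by rw [hSdef, hDdef]; ring]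
                exact dvd_sub hp3S h3D
              have h3n : p^3 ∣ 2*(t^2*b^2) := by
                have := (tr 3 _ p).mp h3TB2
                rwa [Int.natAbs_mul, habsTB] at this
              have hv2tb : (2*(t^2*b^2)).factorization p = 2 := by
                rw [Nat.factorization_mul (by norm_num) htb0]
                simp [hvtb, Nat.factorization_eq_zero_of_not_dvd hpodd]
              rw [hp.pow_dvd_iff_le_factorization (by positivity), hv2tb] at h3n
              omega
            have hva' : a.factorization p = 1 := hva1
            omega
          · -- v_p(S) ≤ 2
            have hvs2' : s.factorization p ≤ 2 := fact_le_of_not_dvd hp hs h3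
            omega
        · -- p ∤ A : everything on the right is coprime to p
          have hva : a.factorization p = 0 := Nat.factorization_eq_zero_of_not_dvd hpa
          have hpd : ¬ p ∣ d := by
            intro hpd
            have hpD : (p:ℤ) ∣ D := by rw [← Int.natAbs_dvd_natAbs]; simpa using hpd
            have h2A2 : (p:ℤ) ∣ 2*A^2 := by
              rw [show 2*A^2 = S + D by rw [hSdef, hDdef]; ring]
              exact dvd_add hpS hpD
            have : p ∣ 2*a^2 := by
              have := (tr 1 (2*A^2) p).mp (by rwa [pow_one])
              rwa [pow_one, Int.natAbs_mul, habsA2] at this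
            rcases (Nat.Prime.dvd_mul hp).mp this with h | h
            · exact hpodd h
            · exact hpa (hp.dvd_of_dvd_pow h)
          have hvd : d.factorization p = 0 := Nat.factorization_eq_zero_of_not_dvd hpd
          omega
    -- assemble
    have hgcd_eq : Int.gcd (S^2) (4*A*B*D) = Nat.gcd (s^2) (4*(a*(b*d))) := by
      have h1 : (S^2).natAbs = s^2 := by simp [Int.natAbs_pow]; rfl
      have h2 : (4*A*B*D).natAbs = 4*(a*(b*d)) := by
        simp [Int.natAbs_mul, mul_assoc]; rfl
      rw [Int.gcd, h1, h2]
    have hdvd : (Int.gcd (S^2) (4*A*B*D) : ℤ) ∣ 4*T^4 := by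
      rw [hgcd_eq]
      have hc : ((4*t^4 : ℕ) : ℤ) = 4*T^4 := by
        push_cast
        rw [htdef, Int.natAbs_of_nonneg hT0.le]
      rw [← hc]
      exact_mod_cast keyN
    exact Int.le_of_dvd (by positivity) hdvd
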